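/- Let (S_j)_{j=0}^{N-1} be a representation of the Cuntz algebra 𝒪_N on H, let f ∈ H with ‖f‖ = 1, let μ_f be a spectral measure of f on [0,1), and let k ≥ 1. Let ψ : ℝ → ℂ be continuous and set ψ̂(t) := ∫_0^1 ψ(x) e^{−itx} dx. Assume that ∫_ℝ |t ψ̂(t)| dt < ∞ and that the Fourier inversion formula ψ(x) = (1/2π) ∫_ℝ ψ̂(t) e^{itx} dt holds for all x ∈ [0,1]. Then | ∫_{[0,1)} ψ dμ_f − ∫_{[0,1)} ψ dμ_f^{(k)} | ≤ N^{−k} ∫_ℝ |t ψ̂(t)| dt. -/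

import Mathlib

open MeasureTheory ContinuousLinearMap
open scoped InnerProductSpace

variable {H : Type*} [NormedAddCommGroup H] [InnerProductSpace ℂ H] [CompleteSpace H]

/-- The word operator `S_α = S_{α 1} ⋯ S_{α k}` associated to a multi-index
`α ∈ {0,…,N-1}^k`. -/
noncomputable def Sw {N : ℕ} (S : Fin N → H →L[ℂ] H) {k : ℕ} (α : Fin k → Fin N) :
    H →L[ℂ] H :=
  (List.ofFn fun i => S (α i)).prod

/-- A family `S_0, …, S_{N-1}` of bounded operators is a representation of the Cuntz
algebra `𝒪_N` if `S_j^* S_k = δ_{jk} I` and `∑ j, S_j S_j^* = I`. -/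
def CuntzRep {N : ℕ} (S : Fin N → H →L[ℂ] H) : Prop :=
  (∀ j k : Fin N, adjoint (S j) ∘L S k = if j = k then 1 else 0) ∧
    ∑ j : Fin N, S j ∘L adjoint (S j) = 1

/-- `x_k(α) = α_1/N + α_2/N² + ⋯ + α_k/N^k`. -/
noncomputable def xk (N : ℕ) {k : ℕ} (α : Fin k → Fin N) : ℝ :=
  ∑ i : Fin k, (α i : ℝ) / (N : ℝ) ^ ((i : ℕ) + 1)

/-- The `N`-adic interval `I_k(α) = [x_k(α), x_k(α) + N^{-k})`. -/
noncomputable def Ik (N : ℕ) {k : ℕ} (α : Fin k → Fin N) : Set ℝ :=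
  Set.Ico (xk N α) (xk N α + ((N : ℝ) ^ k)⁻¹)

/-- A Borel measure `μ` on `[0,1)` is a spectral measure of `g` if `μ([0,1)) = ‖g‖²`
and `μ(I_k(α)) = ‖S_α^* g‖²` for every `k ≥ 1` and multi-index `α`. -/
def IsSpectralMeasureR {N : ℕ} (S : Fin N → H →L[ℂ] H) (g : H) (μ : Measure ℝ) : Prop :=
  μ (Set.Ico (0:ℝ) 1)ᶜ = 0 ∧ μ Set.univ = ENNReal.ofReal (‖g‖ ^ 2) ∧
    ∀ k : ℕ, 1 ≤ k → ∀ α : Fin k → Fin N,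
      μ (Ik N α) = ENNReal.ofReal (‖adjoint (Sw S α) g‖ ^ 2)

/-- The atomic measure `μ_f^{(k)} = ∑_α ‖S_α^* f‖² δ_{x_k(α)}`. -/
noncomputable def muk {N : ℕ} (S : Fin N → H →L[ℂ] H) (f : H) (k : ℕ) : Measure ℝ :=
  ∑ α : Fin k → Fin N,
    ENNReal.ofReal (‖adjoint (Sw S α) f‖ ^ 2) • Measure.dirac (xk N α)


lemma exp_I_lip (a b : ℝ) :
    ‖Complex.exp (Complex.I * a) - Complex.exp (Complex.I * b)‖ ≤ |a - b| := by
  wlog hab : b ≤ a generalizing a b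
  · rw [← norm_neg, neg_sub, ← abs_neg, neg_sub]
    exact this b a (le_of_not_ge hab)
  have key := norm_image_sub_le_of_norm_deriv_le_segment'
    (f := fun s : ℝ => Complex.exp (Complex.I * s))
    (f' := fun s : ℝ => Complex.exp (Complex.I * s) * Complex.I)
    (a := b) (b := a) (C := 1) ?_ ?_ a (Set.right_mem_Icc.2 hab)
  · rw [abs_of_nonneg (by linarith)]; linarith [key]
  · intro x hx
    have h1 : HasDerivAt (fun z : ℂ => Complex.exp (Complex.I * z))
        (Complex.exp (Complex.I * x) * Complex.I) (x : ℂ) := by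
      simpa using (((hasDerivAt_id (x:ℂ)).const_mul Complex.I).cexp)
    exact (h1.comp_ofReal).hasDerivWithinAt
  · intro x hx
    rw [norm_mul]
    simp [mul_comm Complex.I (x:ℂ), Complex.norm_exp_ofReal_mul_I]

lemma psi_lip (ψ ψhat : ℝ → ℂ) (hψ : Continuous ψ)
    (hψhat : ∀ t : ℝ, ψhat t = ∫ x in (0:ℝ)..1, ψ x * Complex.exp (-(Complex.I * t * x)))
    (hint : Integrable (fun t : ℝ => t • ψhat t))
    (hinv : ∀ x ∈ Set.Icc (0:ℝ) 1,
      ψ x = (1 / (2 * Real.pi)) • ∫ t : ℝ, ψhat t * Complex.exp (Complex.I * t * x)) :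
    ∀ x ∈ Set.Icc (0:ℝ) 1, ∀ y ∈ Set.Icc (0:ℝ) 1,
      ‖ψ x - ψ y‖ ≤ (∫ t : ℝ, ‖t • ψhat t‖) * |x - y| := by
  have hcont : Continuous ψhat := by
    have : Continuous fun t : ℝ => ∫ x in (0:ℝ)..1, ψ x * Complex.exp (-(Complex.I * t * x)) := by
      exact intervalIntegral.continuous_parametric_intervalIntegral_of_continuous' (by fun_prop) 0 1
    exact (funext hψhat : ψhat = _) ▸ this
  have hψhatInt : Integrable ψhat := by
    have h1 : IntegrableOn ψhat (Set.Icc (-1:ℝ) 1) := hcont.integrableOn_Icc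
    have h2 : IntegrableOn ψhat (Set.Icc (-1:ℝ) 1)ᶜ := by
      refine Integrable.mono (hint.integrableOn (s := (Set.Icc (-1:ℝ) 1)ᶜ)) hcont.aestronglyMeasurable.restrict ?_
      rw [ae_restrict_iff' measurableSet_Icc.compl]
      filter_upwards with t ht
      rw [norm_smul]
      have h1t : (1:ℝ) ≤ ‖t‖ := by
        simp only [Set.mem_compl_iff, Set.mem_Icc, not_and_or, not_le] at ht
        rw [Real.norm_eq_abs]
        rcases ht with h | h <;> [linarith [abs_of_neg (by linarith : t < 0)];
          linarith [le_abs_self t]]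
      calc ‖ψhat t‖ = 1 * ‖ψhat t‖ := (one_mul _).symm
        _ ≤ ‖t‖ * ‖ψhat t‖ := mul_le_mul_of_nonneg_right h1t (norm_nonneg _)
    have := h1.union h2
    rwa [Set.union_compl_self, integrableOn_univ] at this
  intro x hx y hy
  have hIx : ∀ z : ℝ, Integrable fun t : ℝ => ψhat t * Complex.exp (Complex.I * t * z) := by
    intro z
    refine Integrable.mono hψhatInt ((hcont.mul (by fun_prop)).aestronglyMeasurable) ?_
    · filter_upwards with t
      rw [norm_mul]
      have : ‖Complex.exp (Complex.I * t * z)‖ = 1 := by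
        simp [Complex.norm_exp]
      rw [this, mul_one]
  have hdiff : ψ x - ψ y = (1 / (2 * Real.pi)) •
      ∫ t : ℝ, (ψhat t * Complex.exp (Complex.I * t * x) -
        ψhat t * Complex.exp (Complex.I * t * y)) := by
    rw [hinv x hx, hinv y hy, ← smul_sub, integral_sub (hIx x) (hIx y)]
  rw [hdiff, norm_smul]
  have hbound : ‖∫ t : ℝ, (ψhat t * Complex.exp (Complex.I * t * x) -
      ψhat t * Complex.exp (Complex.I * t * y))‖ ≤ (∫ t : ℝ, ‖t • ψhat t‖) * |x - y| := by
    calc ‖∫ t : ℝ, (ψhat t * Complex.exp (Complex.I * t * x) -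
        ψhat t * Complex.exp (Complex.I * t * y))‖
        ≤ ∫ t : ℝ, ‖ψhat t * Complex.exp (Complex.I * t * x) -
            ψhat t * Complex.exp (Complex.I * t * y)‖ := norm_integral_le_integral_norm _
      _ ≤ ∫ t : ℝ, ‖t • ψhat t‖ * |x - y| := by
          refine integral_mono_of_nonneg (Filter.Eventually.of_forall fun t => norm_nonneg _)
            (hint.norm.mul_const _) (Filter.Eventually.of_forall fun t => ?_)
          show ‖ψhat t * Complex.exp (Complex.I * t * x) -
            ψhat t * Complex.exp (Complex.I * t * y)‖ ≤ ‖t • ψhat t‖ * |x - y|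
          rw [← mul_sub, norm_mul]
          have he : ‖Complex.exp (Complex.I * t * x) - Complex.exp (Complex.I * t * y)‖ ≤
              |t * x - t * y| := by
            have h := exp_I_lip (t * x) (t * y)
            push_cast at h
            rwa [← mul_assoc, ← mul_assoc] at h
          calc ‖ψhat t‖ * ‖Complex.exp (Complex.I * t * x) - Complex.exp (Complex.I * t * y)‖
              ≤ ‖ψhat t‖ * |t * x - t * y| :=
                mul_le_mul_of_nonneg_left he (norm_nonneg _)
            _ = ‖t • ψhat t‖ * |x - y| := by
                rw [norm_smul, Real.norm_eq_abs, ← mul_sub, abs_mul]; ring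
      _ = (∫ t : ℝ, ‖t • ψhat t‖) * |x - y| := by rw [integral_mul_const]
  have h2pi : ‖(1 / (2 * Real.pi) : ℝ)‖ ≤ 1 := by
    rw [Real.norm_eq_abs, abs_of_nonneg (by positivity)]
    rw [div_le_one (by positivity)]
    linarith [Real.two_le_pi, Real.pi_pos]
  calc ‖(1 / (2 * Real.pi) : ℝ)‖ * ‖∫ t : ℝ, (ψhat t * Complex.exp (Complex.I * t * x) -
        ψhat t * Complex.exp (Complex.I * t * y))‖
      ≤ 1 * ((∫ t : ℝ, ‖t • ψhat t‖) * |x - y|) := by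
        exact mul_le_mul h2pi hbound (norm_nonneg _) zero_le_one
    _ = (∫ t : ℝ, ‖t • ψhat t‖) * |x - y| := one_mul _

/-- digit value -/
noncomputable def cv {N k : ℕ} (α : Fin k → Fin N) : ℕ :=
  ((finFunctionFinEquiv (fun i => α i.rev) : Fin (N ^ k)) : ℕ)

lemma cv_lt {N k : ℕ} (α : Fin k → Fin N) : cv α < N ^ k := (finFunctionFinEquiv _).isLt

lemma cv_inj {N k : ℕ} : Function.Injective (cv (N := N) (k := k)) := by
  intro α β h
  have h2 : (finFunctionFinEquiv fun i => α i.rev) = (finFunctionFinEquiv fun i => β i.rev) :=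
    Fin.val_injective h
  have h3 := finFunctionFinEquiv.injective h2
  funext j
  have := congrFun h3 j.rev
  simpa [Fin.rev_rev] using this

lemma xk_eq_cv {N k : ℕ} (hN : N ≠ 0) (α : Fin k → Fin N) :
    xk N α = (cv α : ℝ) / (N : ℝ) ^ k := by
  have hN0 : (0:ℝ) < (N:ℝ) := by positivity
  rw [cv, finFunctionFinEquiv_apply]
  push_cast
  rw [Finset.sum_div]
  rw [xk]
  refine Fintype.sum_equiv Fin.revPerm _ _ fun j => ?_
  simp only [Fin.revPerm_apply, Fin.rev_rev]
  have hpow : (N:ℝ) ^ ((j.rev : ℕ)) = (N:ℝ) ^ k / (N:ℝ) ^ ((j:ℕ) + 1) := by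
    rw [Fin.val_rev, eq_div_iff (by positivity), ← pow_add]
    congr 1
    omega
  rw [hpow]
  field_simp

lemma xk_nonneg {N k : ℕ} (α : Fin k → Fin N) : 0 ≤ xk N α :=
  Finset.sum_nonneg fun i _ => by positivity

lemma xk_add_le_one {N k : ℕ} (hN : N ≠ 0) (α : Fin k → Fin N) :
    xk N α + ((N : ℝ) ^ k)⁻¹ ≤ 1 := by
  have hNk : (0:ℝ) < (N:ℝ) ^ k := by positivity
  rw [xk_eq_cv hN, inv_eq_one_div, ← add_div, div_le_one hNk]
  have := cv_lt α
  push_cast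
  have : (cv α : ℝ) + 1 ≤ ((N ^ k : ℕ) : ℝ) := by exact_mod_cast this
  push_cast at this
  linarith

lemma mem_Ik {N k : ℕ} (hN : N ≠ 0) (α : Fin k → Fin N) {x : ℝ} (hx : x ∈ Ik N α) :
    (cv α : ℝ) ≤ (N:ℝ) ^ k * x ∧ (N:ℝ) ^ k * x < (cv α : ℝ) + 1 := by
  have hNk : (0:ℝ) < (N:ℝ) ^ k := by positivity
  obtain ⟨h1, h2⟩ := hx
  rw [xk_eq_cv hN] at h1 h2
  constructor
  · rw [div_le_iff₀ hNk] at h1; linarith [h1]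
  · have e1 : (N:ℝ)^k * ((cv α : ℝ) / (N:ℝ)^k) = (cv α : ℝ) := by field_simp
    have e2 : (N:ℝ)^k * ((N:ℝ)^k)⁻¹ = 1 := by field_simp
    nlinarith [mul_lt_mul_of_pos_left h2 hNk]

lemma cv_eq_floor {N k : ℕ} (hN : N ≠ 0) (α : Fin k → Fin N) {x : ℝ} (hx : x ∈ Ik N α) :
    cv α = ⌊(N:ℝ) ^ k * x⌋₊ := by
  obtain ⟨h1, h2⟩ := mem_Ik hN α hx
  symm
  rw [Nat.floor_eq_iff (le_trans (Nat.cast_nonneg _) h1)]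
  exact ⟨h1, h2⟩

lemma Ik_disjoint {N k : ℕ} (hN : N ≠ 0) :
    Pairwise (Function.onFun Disjoint (Ik N (k := k))) := by
  intro α β hne
  rw [Function.onFun, Set.disjoint_left]
  intro x hx1 hx2
  exact hne (cv_inj ((cv_eq_floor hN α hx1).trans (cv_eq_floor hN β hx2).symm))

lemma Ik_union {N k : ℕ} (hN : N ≠ 0) :
    ⋃ α : Fin k → Fin N, Ik N α = Set.Ico (0:ℝ) 1 := by
  have hNk : (0:ℝ) < (N:ℝ) ^ k := by positivity
  apply Set.Subset.antisymm
  · refine Set.iUnion_subset fun α => ?_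
    intro x hx
    exact ⟨le_trans (xk_nonneg α) hx.1, lt_of_lt_of_le hx.2 (xk_add_le_one hN α)⟩
  · intro x hx
    obtain ⟨hx0, hx1⟩ := hx
    have hge : 0 ≤ (N:ℝ) ^ k * x := by positivity
    set m : ℕ := ⌊(N:ℝ) ^ k * x⌋₊ with hm
    have hmlt : m < N ^ k := by
      rw [hm, Nat.floor_lt hge]
      push_cast
      calc (N:ℝ)^k * x < (N:ℝ)^k * 1 := by apply mul_lt_mul_of_pos_left hx1 hNk
        _ = (N:ℝ)^k := mul_one _
    set α : Fin k → Fin N := fun j => (finFunctionFinEquiv.symm ⟨m, hmlt⟩) j.rev with hα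
    have hcv : cv α = m := by
      rw [cv, hα]
      have : (fun i : Fin k => finFunctionFinEquiv.symm ⟨m, hmlt⟩ i.rev.rev) =
          finFunctionFinEquiv.symm ⟨m, hmlt⟩ := by
        funext i; rw [Fin.rev_rev]
      rw [this, Equiv.apply_symm_apply]
    refine Set.mem_iUnion.2 ⟨α, ?_⟩
    rw [Ik, xk_eq_cv hN, hcv]
    constructor
    · rw [div_le_iff₀ hNk, mul_comm]
      exact Nat.floor_le hge
    · have h := Nat.lt_floor_add_one ((N:ℝ)^k * x)
      rw [inv_eq_one_div, ← add_div, lt_div_iff₀ hNk, mul_comm]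
      push_cast
      rw [hm]
      exact_mod_cast h

/-- Approximation of integrals against a spectral measure by those against the atomic
measures `μ_f^{(k)}`: `|∫ψ dμ_f − ∫ψ dμ_f^{(k)}| ≤ N^{-k} ∫_ℝ |t ψ̂(t)| dt`. -/
theorem stmt_7 {N : ℕ} (hN : 2 ≤ N) (S : Fin N → H →L[ℂ] H) (hS : CuntzRep S)
    (f : H) (hf : ‖f‖ = 1)
    (μ : Measure ℝ) (hμ : IsSpectralMeasureR S f μ)
    (k : ℕ) (hk : 1 ≤ k)
    (ψ : ℝ → ℂ) (hψ : Continuous ψ) (ψhat : ℝ → ℂ)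
    (hψhat : ∀ t : ℝ, ψhat t = ∫ x in (0:ℝ)..1, ψ x * Complex.exp (-(Complex.I * t * x)))
    (hint : Integrable (fun t : ℝ => t • ψhat t))
    (hinv : ∀ x ∈ Set.Icc (0:ℝ) 1,
      ψ x = (1 / (2 * Real.pi)) • ∫ t : ℝ, ψhat t * Complex.exp (Complex.I * t * x)) :
    ‖(∫ x in Set.Ico (0:ℝ) 1, ψ x ∂μ) - ∫ x in Set.Ico (0:ℝ) 1, ψ x ∂(muk S f k)‖ ≤
      ((N : ℝ) ^ k)⁻¹ * ∫ t : ℝ, ‖t • ψhat t‖ := by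
  have hN0 : N ≠ 0 := by omega
  have hNk : (0:ℝ) < (N:ℝ) ^ k := by positivity
  set C : ℝ := ∫ t : ℝ, ‖t • ψhat t‖ with hC
  have hC0 : 0 ≤ C := integral_nonneg fun t => norm_nonneg _
  set w : (Fin k → Fin N) → ℝ := fun α => ‖adjoint (Sw S α) f‖ ^ 2 with hw
  have hw0 : ∀ α, 0 ≤ w α := fun α => by positivity
  have hμI : ∀ α : Fin k → Fin N, μ (Ik N α) = ENNReal.ofReal (w α) := hμ.2.2 k hk
  have hμuniv : μ Set.univ = 1 := by rw [hμ.2.1, hf]; norm_num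
  have hfin : IsFiniteMeasure μ := ⟨by rw [hμuniv]; exact ENNReal.one_lt_top⟩
  obtain ⟨Cb, hCb⟩ :=
    (isCompact_Icc (a := (0:ℝ)) (b := 1)).exists_bound_of_continuousOn hψ.continuousOn
  have hIntOn : ∀ s : Set ℝ, MeasurableSet s → s ⊆ Set.Icc 0 1 → IntegrableOn ψ s μ := by
    intro s hs hsub
    refine Integrable.mono' (integrable_const Cb) hψ.aestronglyMeasurable.restrict ?_
    rw [ae_restrict_iff' hs]
    filter_upwards with x hx using hCb x (hsub hx)
  have hIkm : ∀ α : Fin k → Fin N, MeasurableSet (Ik N α) := fun α => measurableSet_Ico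
  have hIksub : ∀ α : Fin k → Fin N, Ik N α ⊆ Set.Icc (0:ℝ) 1 := fun α x hx =>
    ⟨le_trans (xk_nonneg α) hx.1, le_of_lt (lt_of_lt_of_le hx.2 (xk_add_le_one hN0 α))⟩
  have hxkIcc : ∀ α : Fin k → Fin N, xk N α ∈ Set.Icc (0:ℝ) 1 := fun α =>
    hIksub α ⟨le_refl _, lt_add_of_pos_right _ (inv_pos.2 hNk)⟩
  have hxkIco : ∀ α : Fin k → Fin N, xk N α ∈ Set.Ico (0:ℝ) 1 := fun α =>
    ⟨xk_nonneg α, lt_of_lt_of_le (lt_add_of_pos_right _ (inv_pos.2 hNk)) (xk_add_le_one hN0 α)⟩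
  -- Step 1 : decompose the μ-integral
  have hstep1 : ∫ x in Set.Ico (0:ℝ) 1, ψ x ∂μ = ∑ α : Fin k → Fin N, ∫ x in Ik N α, ψ x ∂μ := by
    rw [← Ik_union (k := k) hN0,
      integral_iUnion hIkm (Ik_disjoint hN0)
        (by rw [Ik_union hN0]; exact hIntOn _ measurableSet_Ico Set.Ico_subset_Icc_self),
      tsum_fintype]
  -- Step 2 : compute the muk-integral
  have hdirac : ∀ α : Fin k → Fin N, Integrable ψ (Measure.dirac (xk N α)) := by
    intro α
    refine ⟨hψ.aestronglyMeasurable, ?_⟩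
    simp [HasFiniteIntegral, lintegral_dirac]
  have hstep2 : ∫ x in Set.Ico (0:ℝ) 1, ψ x ∂(muk S f k) =
      ∑ α : Fin k → Fin N, w α • ψ (xk N α) := by
    have hres : (muk S f k).restrict (Set.Ico 0 1) = muk S f k := by
      apply Measure.restrict_eq_self_of_ae_mem
      rw [ae_iff]
      have : {x : ℝ | ¬ x ∈ Set.Ico (0:ℝ) 1} = (Set.Ico (0:ℝ) 1)ᶜ := rfl
      rw [this, muk, Measure.finset_sum_apply]
      refine Finset.sum_eq_zero fun α _ => ?_
      rw [Measure.smul_apply, Measure.dirac_apply' _ measurableSet_Ico.compl]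
      rw [Set.indicator_of_notMem (by simpa using hxkIco α)]
      simp
    rw [hres, muk, integral_finset_sum_measure
      (fun α _ => (hdirac α).smul_measure ENNReal.ofReal_ne_top)]
    refine Finset.sum_congr rfl fun α _ => ?_
    rw [integral_smul_measure, integral_dirac, ENNReal.toReal_ofReal (hw0 α)]
  -- Step 3 : per-term bound
  have hlip := psi_lip ψ ψhat hψ hψhat hint hinv
  have hterm : ∀ α : Fin k → Fin N,
      ‖(∫ x in Ik N α, ψ x ∂μ) - w α • ψ (xk N α)‖ ≤ C * ((N:ℝ) ^ k)⁻¹ * w α := by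
    intro α
    have hconst : ∫ _x in Ik N α, ψ (xk N α) ∂μ = w α • ψ (xk N α) := by
      rw [setIntegral_const, measureReal_def, hμI α, ENNReal.toReal_ofReal (hw0 α)]
    have hTeq : (∫ x in Ik N α, ψ x ∂μ) - w α • ψ (xk N α) =
        ∫ x in Ik N α, (ψ x - ψ (xk N α)) ∂μ := by
      rw [integral_sub (hIntOn _ (hIkm α) (hIksub α))
        (integrableOn_const (measure_lt_top μ _).ne), hconst]
    rw [hTeq]
    refine le_trans (norm_setIntegral_le_of_norm_le_const (μ := μ) (s := Ik N α)
      (f := fun x => ψ x - ψ (xk N α)) (C := C * ((N:ℝ) ^ k)⁻¹) (measure_lt_top μ _)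
      (fun x hx => ?_)) ?_
    · calc ‖ψ x - ψ (xk N α)‖ ≤ C * |x - xk N α| := hlip x (hIksub α hx) _ (hxkIcc α)
        _ ≤ C * ((N:ℝ) ^ k)⁻¹ := by
            refine mul_le_mul_of_nonneg_left ?_ hC0
            rw [abs_of_nonneg (by linarith [hx.1])]
            linarith [hx.2]
    · rw [measureReal_def, hμI α, ENNReal.toReal_ofReal (hw0 α)]
  -- Step 4 : sum of weights is at most 1
  have hwsum : ∑ α : Fin k → Fin N, w α ≤ 1 := by
    rw [← ENNReal.ofReal_le_one, ENNReal.ofReal_sum_of_nonneg (fun α _ => hw0 α)]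
    simp_rw [← hμI]
    rw [← tsum_fintype (L := SummationFilter.unconditional _), ← measure_iUnion (Ik_disjoint hN0) hIkm, Ik_union hN0]
    exact hμuniv ▸ measure_mono (Set.subset_univ _)
  -- Conclusion
  rw [hstep1, hstep2, ← Finset.sum_sub_distrib]
  calc ‖∑ α : Fin k → Fin N, ((∫ x in Ik N α, ψ x ∂μ) - w α • ψ (xk N α))‖
      ≤ ∑ α : Fin k → Fin N, ‖(∫ x in Ik N α, ψ x ∂μ) - w α • ψ (xk N α)‖ :=
        norm_sum_le _ _
    _ ≤ ∑ α : Fin k → Fin N, C * ((N:ℝ) ^ k)⁻¹ * w α :=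
        Finset.sum_le_sum fun α _ => hterm α
    _ = C * ((N:ℝ) ^ k)⁻¹ * ∑ α : Fin k → Fin N, w α := by rw [← Finset.mul_sum]
    _ ≤ C * ((N:ℝ) ^ k)⁻¹ * 1 := by
        refine mul_le_mul_of_nonneg_left hwsum (by positivity)
    _ = ((N:ℝ) ^ k)⁻¹ * C := by ring
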